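/- Let 2 ≤ l ≤ n−1 and let J ⊂ S be the ideal generated by all monomials w of degree d with x_2^d ≥_lex w ≥_lex x_l·x_n^{d-1}. Then for every monomial h of degree d of the form h = x_1·x_{l+1}^{α_{l+1}}···x_n^{α_n} (i.e., h is divisible by x_1 and by no variable among x_2, …, x_l), the colon ideal J : h equals (x_2, …, x_l). -/

import Mathlib

open MvPolynomial

/-- Exponent vectors of monomials in `n` variables; index `i` corresponds to the variable
`x_{i+1}`, so that the `toLex` order on exponent vectors is the lexicographic order on
monomials with `x_1 > x_2 > ⋯ > x_n`. -/
abbrev Mon (n : ℕ) := Fin n →₀ ℕ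

/-- The degree of a monomial. -/
def monDeg {n : ℕ} (m : Mon n) : ℕ := ∑ i, m i

/-- The lexsegment `L(u,v)`: monomials of degree `d` with `u ≥_lex w ≥_lex v`. -/
def lexSeg {n : ℕ} (d : ℕ) (u v : Mon n) : Set (Mon n) :=
  {w | monDeg w = d ∧ toLex v ≤ toLex w ∧ toLex w ≤ toLex u}

/-- The monomial ideal generated by a set of monomials. -/
noncomputable def monomialIdeal {n : ℕ} (k : Type*) [Field k] (T : Set (Mon n)) :
    Ideal (MvPolynomial (Fin n) k) :=
  Ideal.span ((fun m => (monomial m (1 : k) : MvPolynomial (Fin n) k)) '' T)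

/-- The order `≺` on monomials of a fixed degree: `w ≺ w'` iff `ν₁(w) < ν₁(w')`, or
`ν₁(w) = ν₁(w')` and `w >_lex w'`. -/
def prec {n : ℕ} [NeZero n] (z w : Mon n) : Prop :=
  z 0 < w 0 ∨ (z 0 = w 0 ∧ toLex w < toLex z)

/-- A set `T` of monomials, totally ordered by a relation `r`, generates an ideal with linear
quotients with respect to `r` if for every `w ∈ T` the colon ideal of the ideal generated by
the earlier monomials `{z ∈ T | r z w}` by `w` is generated by a subset of the variables. -/
noncomputable def hasLinearQuotientsWrt {n : ℕ} (k : Type*) [Field k] (T : Set (Mon n))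
    (r : Mon n → Mon n → Prop) : Prop :=
  ∀ w ∈ T, ∃ V : Set (Fin n),
    Submodule.colon (monomialIdeal k {z ∈ T | r z w})
        (Ideal.span {(monomial w (1 : k) : MvPolynomial (Fin n) k)}) =
      Ideal.span ((fun i => (X i : MvPolynomial (Fin n) k)) '' V)

/-- `max(m)`: the largest index of a variable dividing the monomial `m`. -/
def maxVar {n : ℕ} [NeZero n] (m : Mon n) : Fin n := m.support.max.unbotD 0

/-- The shadow of a set of monomials. -/
def shad {n : ℕ} (T : Set (Mon n)) : Set (Mon n) :=
  {m | ∃ t ∈ T, ∃ i : Fin n, m = t + Finsupp.single i 1}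

/-- A set of monomials is a lexsegment if it is of the form `L(u,v)`. -/
def IsLexSegSet {n : ℕ} (T : Set (Mon n)) : Prop :=
  ∃ (e : ℕ) (u v : Mon n), monDeg u = e ∧ monDeg v = e ∧ toLex v ≤ toLex u ∧ T = lexSeg e u v

/-- A lexsegment is a completely lexsegment if all its iterated shadows are lexsegments. -/
def IsCompletelyLexSeg {n : ℕ} (T : Set (Mon n)) : Prop :=
  ∀ j : ℕ, IsLexSegSet (shad^[j] T)

/-- `set(w)` for `w ∈ L(u,v)`: the set of `s` with `x_s · w ∈ I_{≺ w}`, where `I_{≺ w}` is the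
ideal generated by `{z ∈ L(u,v) | z ≺ w}`. -/
noncomputable def setW {n : ℕ} [NeZero n] (k : Type*) [Field k] (d : ℕ) (u v : Mon n)
    (w : Mon n) : Set (Fin n) :=
  {s | (monomial (w + Finsupp.single s 1) (1 : k) : MvPolynomial (Fin n) k) ∈
    monomialIdeal k {z ∈ lexSeg d u v | prec z w}}

/-- `g` is the value of the decomposition function of `I = (L(u,v))` at the monomial `m`:
`g` is the `≺`-smallest `w' ∈ L(u,v)` such that `m ∈ I_{⪯ w'}`. -/
noncomputable def isDecompOf {n : ℕ} [NeZero n] (k : Type*) [Field k] (d : ℕ) (u v : Mon n)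
    (m : Mon n) (g : Mon n) : Prop :=
  g ∈ lexSeg d u v ∧
  (monomial m (1 : k) : MvPolynomial (Fin n) k) ∈
      monomialIdeal k {z ∈ lexSeg d u v | prec z g ∨ z = g} ∧
  ∀ w' ∈ lexSeg d u v,
    (monomial m (1 : k) : MvPolynomial (Fin n) k) ∈
        monomialIdeal k {z ∈ lexSeg d u v | prec z w' ∨ z = w'} →
      g = w' ∨ prec g w'

/-- Reversing the variables: the `toLex` order on `revMon` exponent vectors is the
lexicographic order induced by `x_n > x_{n-1} > ⋯ > x_1`. -/
def revMon {n : ℕ} (m : Mon n) : Mon n := Finsupp.equivMapDomain Fin.revPerm m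

/-- The depth of `S/I` with respect to the graded maximal ideal `(x_1, …, x_n)`:
the maximal length of an `S/I`-regular sequence of elements of `(x_1, …, x_n)`. -/
noncomputable def ringDepth {n : ℕ} {k : Type*} [Field k]
    (I : Ideal (MvPolynomial (Fin n) k)) : ℕ :=
  sSup {r : ℕ | ∃ rs : List (MvPolynomial (Fin n) k), rs.length = r ∧
    (∀ x ∈ rs, x ∈ Ideal.span (Set.range (X : Fin n → MvPolynomial (Fin n) k))) ∧
    RingTheory.Sequence.IsRegular (MvPolynomial (Fin n) k ⧸ I) rs}

open scoped Pointwise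

lemma monDeg_add {n : ℕ} (a b : Mon n) : monDeg (a + b) = monDeg a + monDeg b := by
  simp [monDeg, Finset.sum_add_distrib]

lemma monDeg_single {n : ℕ} (i : Fin n) (e : ℕ) : monDeg (Finsupp.single i e) = e := by
  simp [monDeg, Finsupp.single_apply]

lemma lex_single_last_le {n : ℕ} (hn : 1 ≤ n) (e : ℕ) (z : Mon n) (hz : monDeg z = e) :
    toLex (Finsupp.single (⟨n - 1, by omega⟩ : Fin n) e) ≤ toLex z := by
  by_cases hcase : ∀ i : Fin n, i.val < n - 1 → z i = 0
  · have hzeq : z = Finsupp.single (⟨n - 1, by omega⟩ : Fin n) e := by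
      ext i
      rcases lt_or_ge i.val (n - 1) with hi | hi
      · rw [hcase i hi, Finsupp.single_apply, if_neg (by simp [Fin.ext_iff] <;> omega)]
      · have hieq : i = (⟨n - 1, by omega⟩ : Fin n) := by
          apply Fin.ext; simp; omega
        rw [hieq]
        rw [Finsupp.single_apply, if_pos rfl, ← hz, monDeg]
        rw [Finset.sum_eq_single (⟨n - 1, by omega⟩ : Fin n)]
        · intro b _ hb
          exact hcase b (by rcases Fin.lt_or_lt_of_ne hb with h | h <;> simp [Fin.lt_def] at h <;> omega)
        · simp
    rw [hzeq]
  · push_neg at hcase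
    apply le_of_lt
    set F : Finset (Fin n) := Finset.univ.filter (fun i => i.val < n - 1 ∧ z i ≠ 0) with hF
    have hFne : F.Nonempty := by
      obtain ⟨i, hi1, hi2⟩ := hcase
      exact ⟨i, by simp [hF, hi1, hi2]⟩
    set i₀ := F.min' hFne with hi₀
    have hi₀mem : i₀ ∈ F := F.min'_mem hFne
    simp only [hF, Finset.mem_filter] at hi₀mem
    rw [Finsupp.Lex.lt_iff]
    refine ⟨i₀, ?_, ?_⟩
    · intro j hj
      have hjlt : j.val < n - 1 := lt_trans (by exact_mod_cast hj) hi₀mem.2.1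
      have hzj : z j = 0 := by
        by_contra hzj
        have : i₀ ≤ j := F.min'_le j (by simp [hF, hjlt, hzj])
        exact absurd hj (not_lt.mpr this)
      simp only [ofLex_toLex]
      rw [hzj, Finsupp.single_apply, if_neg (by simp [Fin.ext_iff] <;> omega)]
    · simp only [ofLex_toLex]
      rw [Finsupp.single_apply, if_neg (by simp [Fin.ext_iff] <;> omega)]
      exact Nat.pos_of_ne_zero hi₀mem.2.2

/-- Let `J` be the ideal generated by the monomials `w` of degree `d` with
`x_2^d ≥_lex w ≥_lex x_l x_n^{d-1}`.  Then for every monomial `h` of degree `d` of the form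
`h = x_1 x_{l+1}^{α_{l+1}} ⋯ x_n^{α_n}`, the colon ideal `J : h` equals `(x_2, …, x_l)`. -/
theorem colon_J_eq_x2_to_xl {n : ℕ} [NeZero n] (hn : 2 ≤ n) (k : Type*) [Field k]
    (d : ℕ) (hd : 2 ≤ d) (l : ℕ) (hl : 2 ≤ l) (hln : l ≤ n - 1)
    (h : Mon n) (hhd : monDeg h = d) (hh0 : h 0 = 1)
    (hhMid : ∀ i : Fin n, 1 ≤ i.val → i.val ≤ l - 1 → h i = 0) :
    Submodule.colon
        (monomialIdeal k {w : Mon n | monDeg w = d ∧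
          toLex (Finsupp.single (⟨l - 1, by omega⟩ : Fin n) 1 +
            Finsupp.single (⟨n - 1, by omega⟩ : Fin n) (d - 1)) ≤ toLex w ∧
          toLex w ≤ toLex (Finsupp.single (⟨1, by omega⟩ : Fin n) d)})
        (Ideal.span {(monomial h (1 : k) : MvPolynomial (Fin n) k)}) =
      Ideal.span ((fun i => (X i : MvPolynomial (Fin n) k)) ''
        {i : Fin n | 1 ≤ i.val ∧ i.val ≤ l - 1}) := by
  classical
  set u : Mon n := Finsupp.single (⟨1, by omega⟩ : Fin n) d with hu
  set v : Mon n := Finsupp.single (⟨l - 1, by omega⟩ : Fin n) 1 +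
      Finsupp.single (⟨n - 1, by omega⟩ : Fin n) (d - 1) with hv
  have himg : ((fun i => (X i : MvPolynomial (Fin n) k)) ''
        {i : Fin n | 1 ≤ i.val ∧ i.val ≤ l - 1}) =
      ((fun s => (monomial s (1 : k) : MvPolynomial (Fin n) k)) ''
        ((fun i : Fin n => Finsupp.single i 1) '' {i : Fin n | 1 ≤ i.val ∧ i.val ≤ l - 1})) := by
    rw [Set.image_image]
    rfl
  ext f
  rw [← Ideal.submodule_span_eq (s := {(monomial h (1 : k) : MvPolynomial (Fin n) k)}),
    Submodule.mem_colon_span_singleton, smul_eq_mul, himg, mem_ideal_span_monomial_image,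
    monomialIdeal, mem_ideal_span_monomial_image]
  constructor
  · intro hmem m hm
    have hsup : (m + h) ∈ (f * monomial h (1 : k)).support := by
      rw [mem_support_iff, coeff_mul_monomial, mul_one]
      exact mem_support_iff.mp hm
    obtain ⟨w, hwT, hwle⟩ := hmem _ hsup
    obtain ⟨hwd, hvw, hwu⟩ := hwT
    have hw0 : w 0 = 0 := by
      by_contra h0
      have : toLex u < toLex w := by
        rw [Finsupp.Lex.lt_iff]
        refine ⟨0, fun j hj => absurd (show j.val < 0 by simpa [Fin.lt_def] using hj) (Nat.not_lt_zero _), ?_⟩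
        simp only [ofLex_toLex, hu]
        rw [Finsupp.single_apply, if_neg (by simp [Fin.ext_iff] <;> omega)]
        exact Nat.pos_of_ne_zero h0
      exact absurd this (not_lt.mpr hwu)
    have hj : ∃ j : Fin n, 1 ≤ j.val ∧ j.val ≤ l - 1 ∧ 1 ≤ w j := by
      by_contra hc
      push_neg at hc
      have : toLex w < toLex v := by
        rw [Finsupp.Lex.lt_iff]
        refine ⟨⟨l - 1, by omega⟩, ?_, ?_⟩
        · intro j hj
          have hjlt : j.val < l - 1 := by exact_mod_cast hj
          have hwj : w j = 0 := by
            rcases Nat.eq_zero_or_pos j.val with h0 | h0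
            · have : j = 0 := by apply Fin.ext; simpa using h0
              rw [this, hw0]
            · exact Nat.lt_one_iff.mp (hc j h0 (by omega))
          simp only [ofLex_toLex, hv, Finsupp.add_apply]
          rw [hwj, Finsupp.single_apply, if_neg (by simp [Fin.ext_iff] <;> omega),
            Finsupp.single_apply, if_neg (by simp [Fin.ext_iff] <;> omega)]
          rfl
        · simp only [ofLex_toLex, hv, Finsupp.add_apply]
          rw [Finsupp.single_apply, if_pos rfl,
            Finsupp.single_apply, if_neg (by simp [Fin.ext_iff] <;> omega)]
          have hwl : w ⟨l - 1, by omega⟩ = 0 :=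
            Nat.lt_one_iff.mp (hc ⟨l - 1, by omega⟩ (by simp; omega) (by simp))
          rw [hwl]; omega
      exact absurd this (not_lt.mpr hvw)
    obtain ⟨j, hj1, hj2, hjw⟩ := hj
    refine ⟨Finsupp.single j 1, ⟨j, ⟨hj1, hj2⟩, rfl⟩, ?_⟩
    rw [Finsupp.single_le_iff]
    have hle := (Finsupp.le_def.mp hwle) j
    rw [Finsupp.add_apply] at hle
    have hhj : h j = 0 := hhMid j hj1 hj2
    omega
  · intro hmem xi hxi
    have hxi' : xi ∈ f.support + (monomial h (1 : k)).support := support_mul _ _ hxi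
    rw [Finset.mem_add] at hxi'
    obtain ⟨m, hm, b, hb, hxieq⟩ := hxi'
    rw [support_monomial, if_neg one_ne_zero, Finset.mem_singleton] at hb
    subst hxieq
    rw [hb]
    obtain ⟨s, ⟨j, ⟨hj1, hj2⟩, hseq⟩, hsm⟩ := hmem m hm
    subst hseq
    rw [Finsupp.single_le_iff] at hsm
    set h' : Mon n := h.erase 0 with hh'
    have hsplit : Finsupp.single (0 : Fin n) 1 + h' = h := by
      have := Finsupp.single_add_erase (0 : Fin n) h
      rwa [hh0] at this
    have hd' : monDeg h' = d - 1 := by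
      have : monDeg (Finsupp.single (0 : Fin n) 1 + h') = d := by rw [hsplit, hhd]
      rw [monDeg_add, monDeg_single] at this
      omega
    have hj0 : j ≠ 0 := by
      intro hj0
      rw [hj0] at hj1
      simp at hj1
    have hh'j : h' j = 0 := by
      rw [hh', Finsupp.erase_ne hj0]
      exact hhMid j hj1 hj2
    refine ⟨Finsupp.single j 1 + h', ⟨?_, ?_, ?_⟩, ?_⟩
    · rw [monDeg_add, monDeg_single, hd']; omega
    · -- toLex v ≤ toLex (single j 1 + h')
      rcases lt_or_eq_of_le (show j.val ≤ l - 1 from hj2) with hcase | hcase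
      · apply le_of_lt
        rw [Finsupp.Lex.lt_iff]
        refine ⟨j, ?_, ?_⟩
        · intro j' hj'
          have hj'lt : j'.val < j.val := by exact_mod_cast hj'
          have hh'0 : h' j' = 0 := by
            rcases Nat.eq_zero_or_pos j'.val with h0 | h0
            · have hj'' : j' = 0 := by apply Fin.ext; simpa using h0
              rw [hj'', hh', Finsupp.erase_same]
            · rw [hh', Finsupp.erase_ne (a := 0) (a' := j') (fun he => by rw [he, Fin.val_zero] at h0; omega)]
              exact hhMid j' h0 (by omega)
          simp only [ofLex_toLex, hv, Finsupp.add_apply, Finsupp.single_apply, hh'0]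
          rw [if_neg (show ¬ (⟨l - 1, by omega⟩ : Fin n) = j' by simp [Fin.ext_iff] <;> omega),
            if_neg (show ¬ (⟨n - 1, by omega⟩ : Fin n) = j' by simp [Fin.ext_iff] <;> omega),
            if_neg (show ¬ j = j' by simp [Fin.ext_iff] <;> omega)]
        · simp only [ofLex_toLex, hv, Finsupp.add_apply, Finsupp.single_apply]
          rw [if_neg (show ¬ (⟨l - 1, by omega⟩ : Fin n) = j by simp [Fin.ext_iff] <;> omega),
            if_neg (show ¬ (⟨n - 1, by omega⟩ : Fin n) = j by simp [Fin.ext_iff] <;> omega),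
            ]
          simp
      · -- j.val = l - 1
        have hjeq : j = (⟨l - 1, by omega⟩ : Fin n) := by apply Fin.ext; simp [hcase]
        rw [hjeq, hv]
        have hle : toLex (Finsupp.single (⟨n - 1, by omega⟩ : Fin n) (d - 1)) ≤ toLex h' :=
          lex_single_last_le (by omega) (d - 1) h' hd'
        calc toLex (Finsupp.single (⟨l - 1, by omega⟩ : Fin n) 1 +
                Finsupp.single (⟨n - 1, by omega⟩ : Fin n) (d - 1))
            = toLex (Finsupp.single (⟨l - 1, by omega⟩ : Fin n) 1) +
                toLex (Finsupp.single (⟨n - 1, by omega⟩ : Fin n) (d - 1)) := toLex_add _ _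
          _ ≤ toLex (Finsupp.single (⟨l - 1, by omega⟩ : Fin n) 1) + toLex h' :=
              add_le_add_right hle _
          _ = toLex (Finsupp.single (⟨l - 1, by omega⟩ : Fin n) 1 + h') := (toLex_add _ _).symm
    · -- toLex (single j 1 + h') ≤ toLex u
      apply le_of_lt
      rw [Finsupp.Lex.lt_iff]
      refine ⟨⟨1, by omega⟩, ?_, ?_⟩
      · intro j' hj'
        have hj'0 : j' = 0 := by
          apply Fin.ext
          have : j'.val < 1 := by exact_mod_cast hj'
          simpa using this
        simp only [ofLex_toLex, hu, hj'0, Finsupp.add_apply]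
        rw [Finsupp.single_apply, if_neg hj0,
          Finsupp.single_apply, if_neg (by simp [Fin.ext_iff] <;> omega)]
        rw [hh', Finsupp.erase_same]
        simp
      · simp only [ofLex_toLex, hu, Finsupp.add_apply]
        rw [Finsupp.single_apply (a := (⟨1, by omega⟩ : Fin n)), if_pos rfl]
        have h1 : h' ⟨1, by omega⟩ = 0 := by
          rw [hh', Finsupp.erase_ne (by simp [Fin.ext_iff])]
          exact hhMid _ (by simp) (by simp; omega)
        have h2 : Finsupp.single j 1 ⟨1, by omega⟩ ≤ 1 := by
          rw [Finsupp.single_apply]; split <;> omega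
        omega
    · -- single j 1 + h' ≤ m + h
      rw [Finsupp.le_def]
      intro i
      simp only [Finsupp.add_apply]
      by_cases hij : i = j
      · subst hij
        rw [Finsupp.single_apply, if_pos rfl, hh'j, hhMid i hj1 hj2]
        omega
      · rw [Finsupp.single_apply, if_neg (Ne.symm hij ∘ Eq.symm ∘ Eq.symm)]
        have : h' i ≤ h i := by
          rcases eq_or_ne i 0 with h0 | h0
          · rw [h0, hh', Finsupp.erase_same]; omega
          · rw [hh', Finsupp.erase_ne h0]
        omega
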